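/- Let H ∈ C¹(ℝ³) and let x ∈ C³(B⁺,ℝ³) be an H-surface. Then on the set B' := {w ∈ B⁺ : W(w) > 0} the unit normal N satisfies the differential equation ΔN + 2(2H(x)² − K − ∇H(x)·N) W N = −2W ∇H(x). -/

import Mathlib

noncomputable section

open Real Set MeasureTheory Filter NNReal

/-- Points of `ℝ³`, realized as functions `Fin 3 → ℝ`. -/
abbrev R3 : Type := Fin 3 → ℝ

/-- The Euclidean inner product on `ℝ³`. -/
def dot3 (a b : R3) : ℝ := a 0 * b 0 + a 1 * b 1 + a 2 * b 2

/-- The cross product on `ℝ³`. -/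
def cross3 (a b : R3) : R3 :=
  ![a 1 * b 2 - a 2 * b 1, a 2 * b 0 - a 0 * b 2, a 0 * b 1 - a 1 * b 0]

/-- The Euclidean norm on `ℝ³`. -/
def norm3 (a : R3) : ℝ := Real.sqrt (dot3 a a)

/-- The upper half disc `B⁺`. -/
def Bplus : Set (ℝ × ℝ) := {w | w.1 ^ 2 + w.2 ^ 2 < 1 ∧ 0 < w.2}

/-- Partial derivative in the `u`-direction of a vector-valued map. -/
def du (x : ℝ × ℝ → R3) (w : ℝ × ℝ) : R3 := fderiv ℝ x w ((1 : ℝ), (0 : ℝ))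

/-- Partial derivative in the `v`-direction of a vector-valued map. -/
def dv (x : ℝ × ℝ → R3) (w : ℝ × ℝ) : R3 := fderiv ℝ x w ((0 : ℝ), (1 : ℝ))

/-- Partial derivative in the `u`-direction of a scalar function. -/
def duS (f : ℝ × ℝ → ℝ) (w : ℝ × ℝ) : ℝ := fderiv ℝ f w ((1 : ℝ), (0 : ℝ))

/-- Partial derivative in the `v`-direction of a scalar function. -/
def dvS (f : ℝ × ℝ → ℝ) (w : ℝ × ℝ) : ℝ := fderiv ℝ f w ((0 : ℝ), (1 : ℝ))

/-- The area element `W = |x_u ∧ x_v|`. -/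
def Wf (x : ℝ × ℝ → R3) (w : ℝ × ℝ) : ℝ := norm3 (cross3 (du x w) (dv x w))

/-- The unit normal `N = W⁻¹ x_u ∧ x_v`. -/
def Nf (x : ℝ × ℝ → R3) (w : ℝ × ℝ) : R3 := (Wf x w)⁻¹ • cross3 (du x w) (dv x w)

/-- Coefficient `h₁₁ = x_uu · N` of the second fundamental form. -/
def h11 (x : ℝ × ℝ → R3) (w : ℝ × ℝ) : ℝ := dot3 (du (du x) w) (Nf x w)

/-- Coefficient `h₁₂ = x_uv · N` of the second fundamental form. -/
def h12 (x : ℝ × ℝ → R3) (w : ℝ × ℝ) : ℝ := dot3 (dv (du x) w) (Nf x w)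

/-- Coefficient `h₂₁ = x_vu · N` of the second fundamental form. -/
def h21 (x : ℝ × ℝ → R3) (w : ℝ × ℝ) : ℝ := dot3 (du (dv x) w) (Nf x w)

/-- Coefficient `h₂₂ = x_vv · N` of the second fundamental form. -/
def h22 (x : ℝ × ℝ → R3) (w : ℝ × ℝ) : ℝ := dot3 (dv (dv x) w) (Nf x w)

/-- The Gaussian curvature `K = (h₁₁h₂₂ − h₁₂²)/W²`. -/
def Kg (x : ℝ × ℝ → R3) (w : ℝ × ℝ) : ℝ :=
  (h11 x w * h22 x w - (h12 x w) ^ 2) / (Wf x w) ^ 2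

/-- The spatial gradient of a function on `ℝ³`. -/
def grad3 (H : R3 → ℝ) (p : R3) : R3 := fun i => fderiv ℝ H p (Pi.single i 1)

/-- The divergence of a vector field on `ℝ³`. -/
def divQ (Q : R3 → R3) (p : R3) : ℝ :=
  fderiv ℝ Q p (Pi.single 0 1) 0 + fderiv ℝ Q p (Pi.single 1 1) 1 +
    fderiv ℝ Q p (Pi.single 2 1) 2

/-- `x` is a surface of prescribed mean curvature `H` on `B⁺`:
`Δx = 2H(x) x_u∧x_v` together with the conformality relations. -/
def IsHSurface (H : R3 → ℝ) (x : ℝ × ℝ → R3) : Prop :=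
  ∀ w ∈ Bplus,
    du (du x) w + dv (dv x) w = (2 * H (x w)) • cross3 (du x w) (dv x w) ∧
    dot3 (du x w) (du x w) = dot3 (dv x w) (dv x w) ∧
    dot3 (du x w) (dv x w) = 0

lemma cross3_0 (a b : R3) : cross3 a b 0 = a 1 * b 2 - a 2 * b 1 := rfl
lemma cross3_1 (a b : R3) : cross3 a b 1 = a 2 * b 0 - a 0 * b 2 := rfl
lemma cross3_2 (a b : R3) : cross3 a b 2 = a 0 * b 1 - a 1 * b 0 := rfl

lemma dot3_comm (a b : R3) : dot3 a b = dot3 b a := by unfold dot3; ring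
lemma dot3_cross_left (a b : R3) : dot3 (cross3 a b) a = 0 := by
  simp [dot3, cross3_0, cross3_1, cross3_2]; ring
lemma dot3_cross_right (a b : R3) : dot3 (cross3 a b) b = 0 := by
  simp [dot3, cross3_0, cross3_1, cross3_2]; ring
lemma lagrange3 (a b p q : R3) :
    dot3 (cross3 a b) (cross3 p q) = dot3 a p * dot3 b q - dot3 a q * dot3 b p := by
  simp [dot3, cross3_0, cross3_1, cross3_2]; ring
lemma dot3_smul_left (t : ℝ) (a b : R3) : dot3 (t • a) b = t * dot3 a b := by
  simp [dot3, Pi.smul_apply, smul_eq_mul]; ring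
lemma dot3_smul_right (t : ℝ) (a b : R3) : dot3 a (t • b) = t * dot3 a b := by
  simp [dot3, Pi.smul_apply, smul_eq_mul]; ring
lemma dot3_add_left (u v t : R3) : dot3 (u + v) t = dot3 u t + dot3 v t := by
  simp [dot3, Pi.add_apply]; ring
lemma dot3_add_right (u v t : R3) : dot3 t (u + v) = dot3 t u + dot3 t v := by
  simp [dot3, Pi.add_apply]; ring
lemma dot3_sub_left (u v t : R3) : dot3 (u - v) t = dot3 u t - dot3 v t := by
  simp [dot3, Pi.sub_apply]; ring
lemma dot3_self_nonneg (a : R3) : 0 ≤ dot3 a a := by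
  unfold dot3; nlinarith [sq_nonneg (a 0), sq_nonneg (a 1), sq_nonneg (a 2)]

lemma eq_zero_of_dot3 {a b e : R3} (h1 : dot3 e a = 0) (h2 : dot3 e b = 0)
    (h3 : dot3 e (cross3 a b) = 0) (hpos : 0 < dot3 (cross3 a b) (cross3 a b)) : e = 0 := by
  funext i
  show e i = 0
  have key : dot3 (cross3 a b) (cross3 a b) * e i =
      dot3 e (cross3 a b) * (cross3 a b) i + dot3 e b * (cross3 (cross3 a b) a) i
        - dot3 e a * (cross3 (cross3 a b) b) i := by
    fin_cases i <;> simp [dot3, cross3_0, cross3_1, cross3_2] <;> ring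
  rw [h1, h2, h3] at key
  ring_nf at key
  rcases mul_eq_zero.mp key with h | h
  · exact absurd h hpos.ne'
  · exact h

lemma parseval3 {a b : R3} {W : ℝ} (haa : dot3 a a = W) (hbb : dot3 b b = W)
    (hab : dot3 a b = 0) (hW : 0 < W) (v u : R3) :
    dot3 v u = (dot3 v a * dot3 u a + dot3 v b * dot3 u b) / W
      + dot3 v (cross3 a b) * dot3 u (cross3 a b) / W ^ 2 := by
  have hcc : dot3 (cross3 a b) (cross3 a b) = W ^ 2 := by
    rw [lagrange3, haa, hbb, hab]; ring
  have he : (W ^ 2) • v - ((W * dot3 v a) • a + (W * dot3 v b) • b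
      + (dot3 v (cross3 a b)) • cross3 a b) = 0 := by
    apply eq_zero_of_dot3 (a := a) (b := b)
    · simp only [dot3_sub_left, dot3_add_left, dot3_smul_left]
      rw [haa, dot3_comm b a, hab, dot3_cross_left]; ring
    · simp only [dot3_sub_left, dot3_add_left, dot3_smul_left]
      rw [hbb, hab, dot3_cross_right]; ring
    · simp only [dot3_sub_left, dot3_add_left, dot3_smul_left]
      rw [hcc, dot3_comm a (cross3 a b), dot3_cross_left, dot3_comm b (cross3 a b),
        dot3_cross_right]; ring
    · rw [hcc]; positivity
  rw [sub_eq_zero] at he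
  have h2 := congrArg (fun t => dot3 t u) he
  simp only [dot3_add_left, dot3_smul_left] at h2
  rw [dot3_comm a u, dot3_comm b u, dot3_comm (cross3 a b) u] at h2
  have hW' := hW.ne'
  field_simp
  linear_combination h2
section Calc
open ContinuousLinearMap

variable {f g : ℝ × ℝ → R3} {φ ψ : ℝ × ℝ → ℝ} {w d : ℝ × ℝ}

lemma hasFDerivAt_proj (hf : DifferentiableAt ℝ f w) (i : Fin 3) :
    HasFDerivAt (fun z => f z i) ((proj i : R3 →L[ℝ] ℝ).comp (fderiv ℝ f w)) w :=
  (proj i : R3 →L[ℝ] ℝ).hasFDerivAt.comp w hf.hasFDerivAt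

lemma differentiableAt_proj3 (hf : DifferentiableAt ℝ f w) (i : Fin 3) :
    DifferentiableAt ℝ (fun z => f z i) w := (hasFDerivAt_proj hf i).differentiableAt

lemma fderiv_proj3 (hf : DifferentiableAt ℝ f w) (i : Fin 3) (d : ℝ × ℝ) :
    fderiv ℝ (fun z => f z i) w d = fderiv ℝ f w d i := by
  rw [(hasFDerivAt_proj hf i).fderiv]; rfl

lemma hasFDerivAt_dot3 (hf : DifferentiableAt ℝ f w) (hg : DifferentiableAt ℝ g w) :
    HasFDerivAt (fun z => dot3 (f z) (g z))
      ((f w 0 • (proj 0 : R3 →L[ℝ] ℝ).comp (fderiv ℝ g w) + g w 0 • (proj 0 : R3 →L[ℝ] ℝ).comp (fderiv ℝ f w))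
       + (f w 1 • (proj 1 : R3 →L[ℝ] ℝ).comp (fderiv ℝ g w) + g w 1 • (proj 1 : R3 →L[ℝ] ℝ).comp (fderiv ℝ f w))
       + (f w 2 • (proj 2 : R3 →L[ℝ] ℝ).comp (fderiv ℝ g w) + g w 2 • (proj 2 : R3 →L[ℝ] ℝ).comp (fderiv ℝ f w))) w := by
  exact (((hasFDerivAt_proj hf 0).mul (hasFDerivAt_proj hg 0)).add
    ((hasFDerivAt_proj hf 1).mul (hasFDerivAt_proj hg 1))).add
    ((hasFDerivAt_proj hf 2).mul (hasFDerivAt_proj hg 2))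

lemma differentiableAt_dot3 (hf : DifferentiableAt ℝ f w) (hg : DifferentiableAt ℝ g w) :
    DifferentiableAt ℝ (fun z => dot3 (f z) (g z)) w :=
  (hasFDerivAt_dot3 hf hg).differentiableAt

lemma fderiv_dot3 (hf : DifferentiableAt ℝ f w) (hg : DifferentiableAt ℝ g w) (d : ℝ × ℝ) :
    fderiv ℝ (fun z => dot3 (f z) (g z)) w d
      = dot3 (fderiv ℝ f w d) (g w) + dot3 (f w) (fderiv ℝ g w d) := by
  rw [(hasFDerivAt_dot3 hf hg).fderiv]
  simp only [ContinuousLinearMap.add_apply, ContinuousLinearMap.smul_apply,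
    ContinuousLinearMap.coe_comp', Function.comp_apply, proj_apply, smul_eq_mul, dot3]
  ring

lemma fderiv_mul_apply (hφ : DifferentiableAt ℝ φ w) (hψ : DifferentiableAt ℝ ψ w) (d : ℝ × ℝ) :
    fderiv ℝ (fun z => φ z * ψ z) w d = fderiv ℝ φ w d * ψ w + φ w * fderiv ℝ ψ w d := by
  rw [fderiv_fun_mul hφ hψ]
  simp only [ContinuousLinearMap.add_apply, ContinuousLinearMap.smul_apply, smul_eq_mul]
  ring

lemma fderiv_sub_apply3 (hf : DifferentiableAt ℝ φ w) (hg : DifferentiableAt ℝ ψ w) (d : ℝ × ℝ) :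
    fderiv ℝ (fun z => φ z - ψ z) w d = fderiv ℝ φ w d - fderiv ℝ ψ w d := by
  rw [fderiv_fun_sub hf hg]; rfl

lemma fderiv_add_applyV (hf : DifferentiableAt ℝ f w) (hg : DifferentiableAt ℝ g w) (d : ℝ × ℝ) :
    fderiv ℝ (fun z => f z + g z) w d = fderiv ℝ f w d + fderiv ℝ g w d := by
  rw [fderiv_fun_add hf hg]; rfl

/-- symmetry of second derivatives -/
lemma sym2 {F : Type*} [NormedAddCommGroup F] [NormedSpace ℝ F] {f : ℝ × ℝ → F} {w : ℝ × ℝ}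
    (hf : ContDiffAt ℝ 2 f w) (d d' : ℝ × ℝ) :
    fderiv ℝ (fun z => fderiv ℝ f z d) w d' = fderiv ℝ (fun z => fderiv ℝ f z d') w d := by
  have h1 : ∀ᶠ z in nhds w, HasFDerivAt f (fderiv ℝ f z) z := by
    filter_upwards [hf.eventually (by simp)] with z hz
    exact (hz.differentiableAt (by norm_num)).hasFDerivAt
  have h2 : DifferentiableAt ℝ (fderiv ℝ f) w :=
    (hf.fderiv_right (m := 1) (by norm_num)).differentiableAt (by norm_num)
  have hsym := second_derivative_symmetric_of_eventually h1 h2.hasFDerivAt d d'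
  have e1 : fderiv ℝ (fun z => fderiv ℝ f z d) w
      = (ContinuousLinearMap.apply ℝ F d).comp (fderiv ℝ (fderiv ℝ f) w) :=
    ((ContinuousLinearMap.apply ℝ F d).hasFDerivAt.comp w h2.hasFDerivAt).fderiv
  have e2 : fderiv ℝ (fun z => fderiv ℝ f z d') w
      = (ContinuousLinearMap.apply ℝ F d').comp (fderiv ℝ (fderiv ℝ f) w) :=
    ((ContinuousLinearMap.apply ℝ F d').hasFDerivAt.comp w h2.hasFDerivAt).fderiv
  rw [e1, e2]
  simpa using hsym.symm

lemma fderiv2_congr_zero {φ : ℝ × ℝ → ℝ} {w : ℝ × ℝ} (h : ∀ z, φ z = 0) (d d' : ℝ × ℝ) :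
    fderiv ℝ (fun z => fderiv ℝ φ z d) w d' = 0 := by
  have h0 : φ = fun _ => (0 : ℝ) := funext h
  subst h0
  simp [fderiv_const]

end Calc
section Calc2
open Filter

variable {w d : ℝ × ℝ}

lemma fderiv2_congr {φ ψ : ℝ × ℝ → ℝ} (h : φ =ᶠ[nhds w] ψ) (d d' : ℝ × ℝ) :
    fderiv ℝ (fun z => fderiv ℝ φ z d) w d' = fderiv ℝ (fun z => fderiv ℝ ψ z d) w d' := by
  have h2 : (fun z => fderiv ℝ φ z d) =ᶠ[nhds w] (fun z => fderiv ℝ ψ z d) := by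
    filter_upwards [h.eventuallyEq_nhds] with z hz
    rw [hz.fderiv_eq]
  rw [h2.fderiv_eq]

lemma fderiv2_const {k : ℝ} (d d' : ℝ × ℝ) :
    fderiv ℝ (fun z => fderiv ℝ (fun _ : ℝ × ℝ => k) z d) w d' = 0 := by
  simp [fderiv_const]

/-- Second-derivative expansion of a dot product, for `f g` C² on an open set `V ∋ w`. -/
lemma fderiv2_dot3 {V : Set (ℝ × ℝ)} (hV : IsOpen V) (hwV : w ∈ V)
    {f g : ℝ × ℝ → R3} (hf : ContDiffOn ℝ 2 f V) (hg : ContDiffOn ℝ 2 g V) (d : ℝ × ℝ) :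
    fderiv ℝ (fun z => fderiv ℝ (fun y => dot3 (f y) (g y)) z d) w d
      = dot3 (fderiv ℝ (fun z => fderiv ℝ f z d) w d) (g w)
        + 2 * dot3 (fderiv ℝ f w d) (fderiv ℝ g w d)
        + dot3 (f w) (fderiv ℝ (fun z => fderiv ℝ g z d) w d) := by
  have hf1 : ContDiffOn ℝ 1 (fun z => fderiv ℝ f z d) V :=
    (hf.fderiv_of_isOpen hV (by norm_num)).clm_apply contDiffOn_const
  have hg1 : ContDiffOn ℝ 1 (fun z => fderiv ℝ g z d) V :=
    (hg.fderiv_of_isOpen hV (by norm_num)).clm_apply contDiffOn_const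
  have hdf : ∀ z ∈ V, DifferentiableAt ℝ f z := fun z hz =>
    ((hf z hz).contDiffAt (hV.mem_nhds hz)).differentiableAt (by norm_num)
  have hdg : ∀ z ∈ V, DifferentiableAt ℝ g z := fun z hz =>
    ((hg z hz).contDiffAt (hV.mem_nhds hz)).differentiableAt (by norm_num)
  have hev : (fun z => fderiv ℝ (fun y => dot3 (f y) (g y)) z d)
      =ᶠ[nhds w] (fun z => dot3 (fderiv ℝ f z d) (g z) + dot3 (f z) (fderiv ℝ g z d)) := by
    filter_upwards [hV.mem_nhds hwV] with z hz
    exact fderiv_dot3 (hdf z hz) (hdg z hz) d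
  rw [hev.fderiv_eq]
  have d1 : DifferentiableAt ℝ (fun z => fderiv ℝ f z d) w :=
    ((hf1 w hwV).contDiffAt (hV.mem_nhds hwV)).differentiableAt (by norm_num)
  have d2 : DifferentiableAt ℝ (fun z => fderiv ℝ g z d) w :=
    ((hg1 w hwV).contDiffAt (hV.mem_nhds hwV)).differentiableAt (by norm_num)
  have d3 : DifferentiableAt ℝ (fun z => dot3 (fderiv ℝ f z d) (g z)) w :=
    differentiableAt_dot3 d1 (hdg w hwV)
  have d4 : DifferentiableAt ℝ (fun z => dot3 (f z) (fderiv ℝ g z d)) w :=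
    differentiableAt_dot3 (hdf w hwV) d2
  have := fderiv_fun_add (𝕜 := ℝ) d3 d4
  rw [this, ContinuousLinearMap.add_apply, fderiv_dot3 d1 (hdg w hwV) d, fderiv_dot3 (hdf w hwV) d2 d]
  rw [dot3_comm (fderiv ℝ f w d) (fderiv ℝ g w d)]
  ring

end Calc2

lemma clm_apply_dot3 (L : R3 →L[ℝ] ℝ) (v : R3) :
    L v = dot3 (fun i => L (Pi.single i 1)) v := by
  have hv : v = v 0 • (Pi.single 0 1 : R3) + v 1 • (Pi.single 1 1 : R3) + v 2 • (Pi.single 2 1 : R3) := by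
    funext j
    fin_cases j <;> simp [Pi.single_apply]
  conv_lhs => rw [hv]
  simp only [map_add, _root_.map_smul, smul_eq_mul, dot3]
  ring

lemma fderiv_comp_H {H : R3 → ℝ} (hH : ContDiff ℝ 1 H) {x : ℝ × ℝ → R3} {w : ℝ × ℝ}
    (hx : DifferentiableAt ℝ x w) (d : ℝ × ℝ) :
    fderiv ℝ (fun z => H (x z)) w d = dot3 (grad3 H (x w)) (fderiv ℝ x w d) := by
  have hd : DifferentiableAt ℝ H (x w) := (hH.differentiable (by norm_num)).differentiableAt
  have : fderiv ℝ (fun z => H (x z)) w = (fderiv ℝ H (x w)).comp (fderiv ℝ x w) :=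
    fderiv_comp w hd hx
  rw [this, ContinuousLinearMap.comp_apply]
  exact clm_apply_dot3 _ _

lemma isOpen_Bplus : IsOpen Bplus := by
  have : Bplus = {w : ℝ × ℝ | w.1 ^ 2 + w.2 ^ 2 < 1} ∩ {w | 0 < w.2} := rfl
  rw [this]
  exact (isOpen_lt (by fun_prop) continuous_const).inter (isOpen_lt continuous_const (by fun_prop))


lemma parseval3' {a b : R3} {W : ℝ} (haa : dot3 a a = W) (hbb : dot3 b b = W)
    (hab : dot3 a b = 0) (hW : 0 < W) (v u : R3) :
    W ^ 2 * dot3 v u = W * (dot3 v a * dot3 u a + dot3 v b * dot3 u b)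
      + dot3 v (cross3 a b) * dot3 u (cross3 a b) := by
  rw [parseval3 haa hbb hab hW v u]
  field_simp

/-- For `H ∈ C¹(ℝ³)` and a `C³` `H`-surface `x` on `B⁺`, on the set
`B' = {W > 0}` the unit normal satisfies
`ΔN + 2(2H(x)² − K − ∇H(x)·N) W N = −2W ∇H(x)`. -/
theorem normal_equation (H : R3 → ℝ) (hH : ContDiff ℝ 1 H) (x : ℝ × ℝ → R3)
    (hx : ContDiffOn ℝ 3 x Bplus) (hxH : IsHSurface H x) :
    ∀ w ∈ Bplus, 0 < Wf x w →
      du (du (Nf x)) w + dv (dv (Nf x)) w +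
          (2 * (2 * (H (x w)) ^ 2 - Kg x w - dot3 (grad3 H (x w)) (Nf x w)) * Wf x w) •
            Nf x w
        = (-(2 * Wf x w)) • grad3 H (x w) := by
  intro w hw hpos
  have hBopen : IsOpen Bplus := isOpen_Bplus
  -- continuity of the squared area element on Bplus
  have hfc : ContinuousOn (fderiv ℝ x) Bplus :=
    hx.continuousOn_fderiv_of_isOpen hBopen (by norm_num)
  have hca : ContinuousOn (du x) Bplus :=
    (ContinuousLinearMap.apply ℝ R3 ((1:ℝ),(0:ℝ))).continuous.comp_continuousOn hfc
  have hcb : ContinuousOn (dv x) Bplus :=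
    (ContinuousLinearMap.apply ℝ R3 ((0:ℝ),(1:ℝ))).continuous.comp_continuousOn hfc
  have hcpa : ∀ i : Fin 3, ContinuousOn (fun z => du x z i) Bplus :=
    fun i => (continuous_apply i).comp_continuousOn hca
  have hcpb : ∀ i : Fin 3, ContinuousOn (fun z => dv x z i) Bplus :=
    fun i => (continuous_apply i).comp_continuousOn hcb
  set G : ℝ × ℝ → ℝ :=
    fun z => dot3 (cross3 (du x z) (dv x z)) (cross3 (du x z) (dv x z)) with hGdef
  have hGc : ContinuousOn G Bplus := by
    have c0 : ContinuousOn (fun z => du x z 1 * dv x z 2 - du x z 2 * dv x z 1) Bplus :=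
      ((hcpa 1).mul (hcpb 2)).sub ((hcpa 2).mul (hcpb 1))
    have c1 : ContinuousOn (fun z => du x z 2 * dv x z 0 - du x z 0 * dv x z 2) Bplus :=
      ((hcpa 2).mul (hcpb 0)).sub ((hcpa 0).mul (hcpb 2))
    have c2 : ContinuousOn (fun z => du x z 0 * dv x z 1 - du x z 1 * dv x z 0) Bplus :=
      ((hcpa 0).mul (hcpb 1)).sub ((hcpa 1).mul (hcpb 0))
    exact ((c0.mul c0).add (c1.mul c1)).add (c2.mul c2)
  have hGw : 0 < G w := by
    have h1 : Wf x w = Real.sqrt (G w) := rfl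
    rw [h1] at hpos
    exact Real.sqrt_pos.mp hpos
  set V : Set (ℝ × ℝ) := Bplus ∩ G ⁻¹' Set.Ioi 0 with hVdef
  have hVopen : IsOpen V := hGc.isOpen_inter_preimage hBopen isOpen_Ioi
  have hwV : w ∈ V := ⟨hw, hGw⟩
  have hVB : V ⊆ Bplus := Set.inter_subset_left
  have hVn : V ∈ nhds w := hVopen.mem_nhds hwV
  -- smoothness hierarchy on V
  have hx3 : ContDiffOn ℝ 3 x V := hx.mono hVB
  have ha2 : ContDiffOn ℝ 2 (du x) V :=
    (hx3.fderiv_of_isOpen hVopen (by norm_num)).clm_apply contDiffOn_const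
  have hb2 : ContDiffOn ℝ 2 (dv x) V :=
    (hx3.fderiv_of_isOpen hVopen (by norm_num)).clm_apply contDiffOn_const
  have hcmpa : ∀ i : Fin 3, ContDiffOn ℝ 2 (fun z => du x z i) V :=
    fun i => ((ContinuousLinearMap.proj i : R3 →L[ℝ] ℝ).contDiff.comp_contDiffOn ha2)
  have hcmpb : ∀ i : Fin 3, ContDiffOn ℝ 2 (fun z => dv x z i) V :=
    fun i => ((ContinuousLinearMap.proj i : R3 →L[ℝ] ℝ).contDiff.comp_contDiffOn hb2)
  have hc2 : ContDiffOn ℝ 2 (fun z => cross3 (du x z) (dv x z)) V := by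
    rw [contDiffOn_pi]
    intro i
    fin_cases i
    · exact ((hcmpa 1).mul (hcmpb 2)).sub ((hcmpa 2).mul (hcmpb 1))
    · exact ((hcmpa 2).mul (hcmpb 0)).sub ((hcmpa 0).mul (hcmpb 2))
    · exact ((hcmpa 0).mul (hcmpb 1)).sub ((hcmpa 1).mul (hcmpb 0))
  have hcmpc : ∀ i : Fin 3, ContDiffOn ℝ 2 (fun z => cross3 (du x z) (dv x z) i) V :=
    fun i => ((ContinuousLinearMap.proj i : R3 →L[ℝ] ℝ).contDiff.comp_contDiffOn hc2)
  have hG2 : ContDiffOn ℝ 2 G V :=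
    (((hcmpc 0).mul (hcmpc 0)).add ((hcmpc 1).mul (hcmpc 1))).add ((hcmpc 2).mul (hcmpc 2))
  have hGpos : ∀ z ∈ V, 0 < G z := fun z hz => hz.2
  have hW2 : ContDiffOn ℝ 2 (Wf x) V := by
    intro z hz
    exact ((Real.contDiffAt_sqrt (hGpos z hz).ne').comp z
      ((hG2 z hz).contDiffAt (hVopen.mem_nhds hz))).contDiffWithinAt
  have hWpos : ∀ z ∈ V, 0 < Wf x z := fun z hz => Real.sqrt_pos.mpr (hGpos z hz)
  have hN2 : ContDiffOn ℝ 2 (Nf x) V :=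
    (hW2.inv (fun z hz => (hWpos z hz).ne')).smul hc2
  -- differentiability helpers
  have hdiffV : ∀ (f : ℝ × ℝ → R3), ContDiffOn ℝ 2 f V → ∀ z ∈ V, DifferentiableAt ℝ f z :=
    fun f hf z hz => ((hf z hz).contDiffAt (hVopen.mem_nhds hz)).differentiableAt (by norm_num)
  have hderV : ∀ (f : ℝ × ℝ → R3) (d : ℝ × ℝ), ContDiffOn ℝ 2 f V →
      ∀ z ∈ V, DifferentiableAt ℝ (fun y => fderiv ℝ f y d) z := by
    intro f d hf z hz
    have h1 : ContDiffOn ℝ 1 (fun y => fderiv ℝ f y d) V :=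
      (hf.fderiv_of_isOpen hVopen (by norm_num)).clm_apply contDiffOn_const
    exact ((h1 z hz).contDiffAt (hVopen.mem_nhds hz)).differentiableAt (by norm_num)
  have hdx : DifferentiableAt ℝ x w :=
    ((hx3 w hwV).contDiffAt hVn).differentiableAt (by norm_num)
  have hda : DifferentiableAt ℝ (du x) w := hdiffV _ ha2 w hwV
  have hdb : DifferentiableAt ℝ (dv x) w := hdiffV _ hb2 w hwV
  have hdN : DifferentiableAt ℝ (Nf x) w := hdiffV _ hN2 w hwV
  have hdAu : DifferentiableAt ℝ (du (du x)) w := hderV (du x) ((1:ℝ),(0:ℝ)) ha2 w hwV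
  have hdBv : DifferentiableAt ℝ (dv (dv x)) w := hderV (dv x) ((0:ℝ),(1:ℝ)) hb2 w hwV
  -- pointwise structural identities
  have hconf1 : ∀ z ∈ Bplus, dot3 (du x z) (du x z) = dot3 (dv x z) (dv x z) :=
    fun z hz => (hxH z hz).2.1
  have hconf2 : ∀ z ∈ Bplus, dot3 (du x z) (dv x z) = 0 := fun z hz => (hxH z hz).2.2
  have hWval : ∀ z ∈ Bplus, Wf x z = dot3 (du x z) (du x z) := by
    intro z hz
    have h1 : G z = (dot3 (du x z) (du x z)) ^ 2 := by
      rw [hGdef]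
      show dot3 (cross3 (du x z) (dv x z)) (cross3 (du x z) (dv x z)) = _
      rw [lagrange3, hconf2 z hz, ← hconf1 z hz]; ring
    show Real.sqrt (G z) = _
    rw [h1, Real.sqrt_sq (dot3_self_nonneg _)]
  have hNa0 : ∀ z, dot3 (Nf x z) (du x z) = 0 := by
    intro z
    show dot3 ((Wf x z)⁻¹ • cross3 (du x z) (dv x z)) (du x z) = 0
    rw [dot3_smul_left, dot3_cross_left, mul_zero]
  have hNb0 : ∀ z, dot3 (Nf x z) (dv x z) = 0 := by
    intro z
    show dot3 ((Wf x z)⁻¹ • cross3 (du x z) (dv x z)) (dv x z) = 0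
    rw [dot3_smul_left, dot3_cross_right, mul_zero]
  have hWsq : ∀ z ∈ V, (Wf x z) ^ 2 = G z := fun z hz => Real.sq_sqrt (hGpos z hz).le
  have hNN1 : ∀ z ∈ V, dot3 (Nf x z) (Nf x z) = 1 := by
    intro z hz
    show dot3 ((Wf x z)⁻¹ • cross3 (du x z) (dv x z)) ((Wf x z)⁻¹ • cross3 (du x z) (dv x z)) = 1
    rw [dot3_smul_left, dot3_smul_right]
    have h1 : dot3 (cross3 (du x z) (dv x z)) (cross3 (du x z) (dv x z)) = Wf x z ^ 2 :=
      (hWsq z hz).symm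
    rw [h1]
    have h2 := (hWpos z hz).ne'
    field_simp
  -- point values and basic relations at w
  have hWne : Wf x w ≠ 0 := hpos.ne'
  have raa : dot3 (du x w) (du x w) = Wf x w := (hWval w hw).symm
  have rbb : dot3 (dv x w) (dv x w) = Wf x w := (hconf1 w hw).symm.trans raa
  have rab : dot3 (du x w) (dv x w) = 0 := hconf2 w hw
  have rcc : dot3 (cross3 (du x w) (dv x w)) (cross3 (du x w) (dv x w)) = (Wf x w) ^ 2 := by
    rw [lagrange3, raa, rbb, rab]; ring
  have rvc : ∀ v : R3, dot3 v (cross3 (du x w) (dv x w)) = Wf x w * dot3 v (Nf x w) := by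
    intro v
    show _ = Wf x w * dot3 v ((Wf x w)⁻¹ • cross3 (du x w) (dv x w))
    rw [dot3_smul_right]
    field_simp
  have rNc : dot3 (Nf x w) (cross3 (du x w) (dv x w)) = Wf x w := by
    rw [rvc, hNN1 w hwV, mul_one]
  -- Schwarz symmetry
  have hsymV : ∀ z ∈ V, du (dv x) z = dv (du x) z := by
    intro z hz
    exact sym2 (((hx3 z hz).contDiffAt (hVopen.mem_nhds hz)).of_le (by norm_num))
      ((0:ℝ),(1:ℝ)) ((1:ℝ),(0:ℝ))
  have rBuQ : du (dv x) w = dv (du x) w := hsymV w hwV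
  -- PDE at w and its normal trace
  have rpde : du (du x) w + dv (dv x) w = (2 * H (x w)) • cross3 (du x w) (dv x w) :=
    (hxH w hw).1
  have rtrace : dot3 (du (du x) w) (Nf x w) + dot3 (dv (dv x) w) (Nf x w)
      = 2 * H (x w) * Wf x w := by
    have h1 := congrArg (fun v => dot3 v (Nf x w)) rpde
    simp only [dot3_add_left, dot3_smul_left] at h1
    rw [h1]
    rw [show dot3 (cross3 (du x w) (dv x w)) (Nf x w)
        = dot3 (Nf x w) (cross3 (du x w) (dv x w)) from dot3_comm _ _, rNc]
  -- first-order identities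
  have fstNa_u : dot3 (du (Nf x) w) (du x w) + dot3 (Nf x w) (du (du x) w) = 0 := by
    have h := fderiv_dot3 hdN hda ((1:ℝ),(0:ℝ))
    have h0 : fderiv ℝ (fun z => dot3 (Nf x z) (du x z)) w ((1:ℝ),(0:ℝ)) = 0 := by
      rw [show (fun z => dot3 (Nf x z) (du x z)) = (fun _ => (0:ℝ)) from funext hNa0]
      simp
    rw [h0] at h
    exact h.symm
  have fstNa_v : dot3 (dv (Nf x) w) (du x w) + dot3 (Nf x w) (dv (du x) w) = 0 := by
    have h := fderiv_dot3 hdN hda ((0:ℝ),(1:ℝ))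
    have h0 : fderiv ℝ (fun z => dot3 (Nf x z) (du x z)) w ((0:ℝ),(1:ℝ)) = 0 := by
      rw [show (fun z => dot3 (Nf x z) (du x z)) = (fun _ => (0:ℝ)) from funext hNa0]
      simp
    rw [h0] at h
    exact h.symm
  have fstNb_u : dot3 (du (Nf x) w) (dv x w) + dot3 (Nf x w) (du (dv x) w) = 0 := by
    have h := fderiv_dot3 hdN hdb ((1:ℝ),(0:ℝ))
    have h0 : fderiv ℝ (fun z => dot3 (Nf x z) (dv x z)) w ((1:ℝ),(0:ℝ)) = 0 := by
      rw [show (fun z => dot3 (Nf x z) (dv x z)) = (fun _ => (0:ℝ)) from funext hNb0]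
      simp
    rw [h0] at h
    exact h.symm
  have fstNb_v : dot3 (dv (Nf x) w) (dv x w) + dot3 (Nf x w) (dv (dv x) w) = 0 := by
    have h := fderiv_dot3 hdN hdb ((0:ℝ),(1:ℝ))
    have h0 : fderiv ℝ (fun z => dot3 (Nf x z) (dv x z)) w ((0:ℝ),(1:ℝ)) = 0 := by
      rw [show (fun z => dot3 (Nf x z) (dv x z)) = (fun _ => (0:ℝ)) from funext hNb0]
      simp
    rw [h0] at h
    exact h.symm
  have hNNev : (fun z => dot3 (Nf x z) (Nf x z)) =ᶠ[nhds w] (fun _ => (1:ℝ)) :=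
    Filter.eventually_of_mem hVn (fun z hz => hNN1 z hz)
  have fstNN_u : dot3 (du (Nf x) w) (Nf x w) = 0 := by
    have h := fderiv_dot3 hdN hdN ((1:ℝ),(0:ℝ))
    have h0 : fderiv ℝ (fun z => dot3 (Nf x z) (Nf x z)) w ((1:ℝ),(0:ℝ)) = 0 := by
      rw [hNNev.fderiv_eq]; simp
    rw [h0] at h
    have h' : 0 = dot3 (du (Nf x) w) (Nf x w) + dot3 (Nf x w) (du (Nf x) w) := h
    have hc := dot3_comm (Nf x w) (du (Nf x) w)
    linarith
  have fstNN_v : dot3 (dv (Nf x) w) (Nf x w) = 0 := by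
    have h := fderiv_dot3 hdN hdN ((0:ℝ),(1:ℝ))
    have h0 : fderiv ℝ (fun z => dot3 (Nf x z) (Nf x z)) w ((0:ℝ),(1:ℝ)) = 0 := by
      rw [hNNev.fderiv_eq]; simp
    rw [h0] at h
    have h' : 0 = dot3 (dv (Nf x) w) (Nf x w) + dot3 (Nf x w) (dv (Nf x) w) := h
    have hc := dot3_comm (Nf x w) (dv (Nf x) w)
    linarith
  -- derivatives of the conformality relations
  have hconfev : (fun z => dot3 (du x z) (du x z)) =ᶠ[nhds w] (fun z => dot3 (dv x z) (dv x z)) :=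
    Filter.eventually_of_mem (hBopen.mem_nhds hw) hconf1
  have hconf2ev : (fun z => dot3 (du x z) (dv x z)) =ᶠ[nhds w] (fun _ => (0:ℝ)) :=
    Filter.eventually_of_mem (hBopen.mem_nhds hw) hconf2
  have z1 : dot3 (du (du x) w) (du x w) = dot3 (du (dv x) w) (dv x w) := by
    have h1 := fderiv_dot3 hda hda ((1:ℝ),(0:ℝ))
    have h2 := fderiv_dot3 hdb hdb ((1:ℝ),(0:ℝ))
    have h3 : fderiv ℝ (fun z => dot3 (du x z) (du x z)) w ((1:ℝ),(0:ℝ))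
        = fderiv ℝ (fun z => dot3 (dv x z) (dv x z)) w ((1:ℝ),(0:ℝ)) := by
      rw [hconfev.fderiv_eq]
    rw [h1, h2] at h3
    have h3' : dot3 (du (du x) w) (du x w) + dot3 (du x w) (du (du x) w)
        = dot3 (du (dv x) w) (dv x w) + dot3 (dv x w) (du (dv x) w) := h3
    have c1 := dot3_comm (du x w) (du (du x) w)
    have c2 := dot3_comm (dv x w) (du (dv x) w)
    linarith
  have z2 : dot3 (dv (du x) w) (du x w) = dot3 (dv (dv x) w) (dv x w) := by
    have h1 := fderiv_dot3 hda hda ((0:ℝ),(1:ℝ))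
    have h2 := fderiv_dot3 hdb hdb ((0:ℝ),(1:ℝ))
    have h3 : fderiv ℝ (fun z => dot3 (du x z) (du x z)) w ((0:ℝ),(1:ℝ))
        = fderiv ℝ (fun z => dot3 (dv x z) (dv x z)) w ((0:ℝ),(1:ℝ)) := by
      rw [hconfev.fderiv_eq]
    rw [h1, h2] at h3
    have h3' : dot3 (dv (du x) w) (du x w) + dot3 (du x w) (dv (du x) w)
        = dot3 (dv (dv x) w) (dv x w) + dot3 (dv x w) (dv (dv x) w) := h3
    have c1 := dot3_comm (du x w) (dv (du x) w)
    have c2 := dot3_comm (dv x w) (dv (dv x) w)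
    linarith
  have z3 : dot3 (du (du x) w) (dv x w) + dot3 (du x w) (du (dv x) w) = 0 := by
    have h1 := fderiv_dot3 hda hdb ((1:ℝ),(0:ℝ))
    have h0 : fderiv ℝ (fun z => dot3 (du x z) (dv x z)) w ((1:ℝ),(0:ℝ)) = 0 := by
      rw [hconf2ev.fderiv_eq]; simp
    rw [h0] at h1
    exact h1.symm
  have z4 : dot3 (dv (du x) w) (dv x w) + dot3 (du x w) (dv (dv x) w) = 0 := by
    have h1 := fderiv_dot3 hda hdb ((0:ℝ),(1:ℝ))
    have h0 : fderiv ℝ (fun z => dot3 (du x z) (dv x z)) w ((0:ℝ),(1:ℝ)) = 0 := by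
      rw [hconf2ev.fderiv_eq]; simp
    rw [h0] at h1
    exact h1.symm
  -- second-order identities
  have S1 : 0 = dot3 (du (du (Nf x)) w) (du x w) + 2 * dot3 (du (Nf x) w) (du (du x) w)
      + dot3 (Nf x w) (du (du (du x)) w) := by
    have h := fderiv2_dot3 hVopen hwV hN2 ha2 ((1:ℝ),(0:ℝ))
    have h0 : fderiv ℝ (fun z => fderiv ℝ (fun y => dot3 (Nf x y) (du x y)) z ((1:ℝ),(0:ℝ))) w
        ((1:ℝ),(0:ℝ)) = 0 := fderiv2_congr_zero hNa0 _ _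
    exact h0.symm.trans h
  have S2 : 0 = dot3 (dv (dv (Nf x)) w) (du x w) + 2 * dot3 (dv (Nf x) w) (dv (du x) w)
      + dot3 (Nf x w) (dv (dv (du x)) w) := by
    have h := fderiv2_dot3 hVopen hwV hN2 ha2 ((0:ℝ),(1:ℝ))
    have h0 : fderiv ℝ (fun z => fderiv ℝ (fun y => dot3 (Nf x y) (du x y)) z ((0:ℝ),(1:ℝ))) w
        ((0:ℝ),(1:ℝ)) = 0 := fderiv2_congr_zero hNa0 _ _
    exact h0.symm.trans h
  have S3 : 0 = dot3 (du (du (Nf x)) w) (dv x w) + 2 * dot3 (du (Nf x) w) (du (dv x) w)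
      + dot3 (Nf x w) (du (du (dv x)) w) := by
    have h := fderiv2_dot3 hVopen hwV hN2 hb2 ((1:ℝ),(0:ℝ))
    have h0 : fderiv ℝ (fun z => fderiv ℝ (fun y => dot3 (Nf x y) (dv x y)) z ((1:ℝ),(0:ℝ))) w
        ((1:ℝ),(0:ℝ)) = 0 := fderiv2_congr_zero hNb0 _ _
    exact h0.symm.trans h
  have S4 : 0 = dot3 (dv (dv (Nf x)) w) (dv x w) + 2 * dot3 (dv (Nf x) w) (dv (dv x) w)
      + dot3 (Nf x w) (dv (dv (dv x)) w) := by
    have h := fderiv2_dot3 hVopen hwV hN2 hb2 ((0:ℝ),(1:ℝ))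
    have h0 : fderiv ℝ (fun z => fderiv ℝ (fun y => dot3 (Nf x y) (dv x y)) z ((0:ℝ),(1:ℝ))) w
        ((0:ℝ),(1:ℝ)) = 0 := fderiv2_congr_zero hNb0 _ _
    exact h0.symm.trans h
  have S5 : 0 = dot3 (du (du (Nf x)) w) (Nf x w) + 2 * dot3 (du (Nf x) w) (du (Nf x) w)
      + dot3 (Nf x w) (du (du (Nf x)) w) := by
    have h := fderiv2_dot3 hVopen hwV hN2 hN2 ((1:ℝ),(0:ℝ))
    have h0 : fderiv ℝ (fun z => fderiv ℝ (fun y => dot3 (Nf x y) (Nf x y)) z ((1:ℝ),(0:ℝ))) w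
        ((1:ℝ),(0:ℝ)) = 0 := by
      rw [fderiv2_congr hNNev ((1:ℝ),(0:ℝ)) ((1:ℝ),(0:ℝ))]
      exact fderiv2_const _ _
    exact h0.symm.trans h
  have S6 : 0 = dot3 (dv (dv (Nf x)) w) (Nf x w) + 2 * dot3 (dv (Nf x) w) (dv (Nf x) w)
      + dot3 (Nf x w) (dv (dv (Nf x)) w) := by
    have h := fderiv2_dot3 hVopen hwV hN2 hN2 ((0:ℝ),(1:ℝ))
    have h0 : fderiv ℝ (fun z => fderiv ℝ (fun y => dot3 (Nf x y) (Nf x y)) z ((0:ℝ),(1:ℝ))) w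
        ((0:ℝ),(1:ℝ)) = 0 := by
      rw [fderiv2_congr hNNev ((0:ℝ),(1:ℝ)) ((0:ℝ),(1:ℝ))]
      exact fderiv2_const _ _
    exact h0.symm.trans h
  -- third-derivative symmetry juggling
  have hsymev : (fun z => du (dv x) z) =ᶠ[nhds w] (fun z => dv (du x) z) :=
    Filter.eventually_of_mem hVn hsymV
  have J1 : dv (dv (du x)) w = du (dv (dv x)) w := by
    have step1 : dv (dv (du x)) w = dv (du (dv x)) w := by
      show fderiv ℝ (dv (du x)) w ((0:ℝ),(1:ℝ)) = fderiv ℝ (du (dv x)) w ((0:ℝ),(1:ℝ))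
      rw [hsymev.symm.fderiv_eq]
    have step2 : dv (du (dv x)) w = du (dv (dv x)) w := by
      have hcd : ContDiffAt ℝ 2 (dv x) w := (hb2 w hwV).contDiffAt hVn
      exact sym2 hcd ((1:ℝ),(0:ℝ)) ((0:ℝ),(1:ℝ))
    exact step1.trans step2
  have J2 : du (du (dv x)) w = dv (du (du x)) w := by
    have step1 : du (du (dv x)) w = du (dv (du x)) w := by
      show fderiv ℝ (du (dv x)) w ((1:ℝ),(0:ℝ)) = fderiv ℝ (dv (du x)) w ((1:ℝ),(0:ℝ))
      rw [hsymev.fderiv_eq]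
    have step2 : du (dv (du x)) w = dv (du (du x)) w := by
      have hcd : ContDiffAt ℝ 2 (du x) w := (ha2 w hwV).contDiffAt hVn
      exact sym2 hcd ((0:ℝ),(1:ℝ)) ((1:ℝ),(0:ℝ))
    exact step1.trans step2
  -- derivative of the PDE right-hand side
  have hφd : DifferentiableAt ℝ (fun z => 2 * H (x z)) w :=
    (((hH.differentiable (by norm_num)).differentiableAt).comp w hdx).const_mul 2
  have hcdiffV : DifferentiableAt ℝ (fun z => cross3 (du x z) (dv x z)) w :=
    hdiffV _ hc2 w hwV
  have hydiff : DifferentiableAt ℝ (fun z => (2 * H (x z)) • cross3 (du x z) (dv x z)) w :=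
    hφd.smul hcdiffV
  have hpa : ∀ i : Fin 3, DifferentiableAt ℝ (fun z => du x z i) w :=
    fun i => differentiableAt_proj3 hda i
  have hpb : ∀ i : Fin 3, DifferentiableAt ℝ (fun z => dv x z i) w :=
    fun i => differentiableAt_proj3 hdb i
  have hyd : ∀ d : ℝ × ℝ, dot3 (Nf x w)
      (fderiv ℝ (fun z => (2 * H (x z)) • cross3 (du x z) (dv x z)) w d)
      = fderiv ℝ (fun z => 2 * H (x z)) w d * dot3 (Nf x w) (cross3 (du x w) (dv x w))
        + 2 * H (x w) * (dot3 (Nf x w) (cross3 (fderiv ℝ (du x) w d) (dv x w))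
          + dot3 (Nf x w) (cross3 (du x w) (fderiv ℝ (dv x) w d))) := by
    intro d
    have hF0 : fderiv ℝ (fun z => (2 * H (x z)) • cross3 (du x z) (dv x z)) w d 0
        = fderiv ℝ (fun z => 2 * H (x z)) w d * (du x w 1 * dv x w 2 - du x w 2 * dv x w 1)
          + 2 * H (x w) * (fderiv ℝ (du x) w d 1 * dv x w 2 + du x w 1 * fderiv ℝ (dv x) w d 2
            - (fderiv ℝ (du x) w d 2 * dv x w 1 + du x w 2 * fderiv ℝ (dv x) w d 1)) := by
      rw [← fderiv_proj3 hydiff 0 d]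
      have e0 : (fun z => ((2 * H (x z)) • cross3 (du x z) (dv x z)) 0)
          = fun z => (2 * H (x z)) * (du x z 1 * dv x z 2 - du x z 2 * dv x z 1) := rfl
      rw [e0, fderiv_mul_apply hφd (((hpa 1).fun_mul (hpb 2)).fun_sub ((hpa 2).fun_mul (hpb 1))) d,
        fderiv_sub_apply3 ((hpa 1).fun_mul (hpb 2)) ((hpa 2).fun_mul (hpb 1)) d,
        fderiv_mul_apply (hpa 1) (hpb 2) d, fderiv_mul_apply (hpa 2) (hpb 1) d,
        fderiv_proj3 hda 1 d, fderiv_proj3 hda 2 d, fderiv_proj3 hdb 1 d,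
        fderiv_proj3 hdb 2 d]
    have hF1 : fderiv ℝ (fun z => (2 * H (x z)) • cross3 (du x z) (dv x z)) w d 1
        = fderiv ℝ (fun z => 2 * H (x z)) w d * (du x w 2 * dv x w 0 - du x w 0 * dv x w 2)
          + 2 * H (x w) * (fderiv ℝ (du x) w d 2 * dv x w 0 + du x w 2 * fderiv ℝ (dv x) w d 0
            - (fderiv ℝ (du x) w d 0 * dv x w 2 + du x w 0 * fderiv ℝ (dv x) w d 2)) := by
      rw [← fderiv_proj3 hydiff 1 d]
      have e0 : (fun z => ((2 * H (x z)) • cross3 (du x z) (dv x z)) 1)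
          = fun z => (2 * H (x z)) * (du x z 2 * dv x z 0 - du x z 0 * dv x z 2) := rfl
      rw [e0, fderiv_mul_apply hφd (((hpa 2).fun_mul (hpb 0)).fun_sub ((hpa 0).fun_mul (hpb 2))) d,
        fderiv_sub_apply3 ((hpa 2).fun_mul (hpb 0)) ((hpa 0).fun_mul (hpb 2)) d,
        fderiv_mul_apply (hpa 2) (hpb 0) d, fderiv_mul_apply (hpa 0) (hpb 2) d,
        fderiv_proj3 hda 2 d, fderiv_proj3 hda 0 d, fderiv_proj3 hdb 2 d,
        fderiv_proj3 hdb 0 d]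
    have hF2 : fderiv ℝ (fun z => (2 * H (x z)) • cross3 (du x z) (dv x z)) w d 2
        = fderiv ℝ (fun z => 2 * H (x z)) w d * (du x w 0 * dv x w 1 - du x w 1 * dv x w 0)
          + 2 * H (x w) * (fderiv ℝ (du x) w d 0 * dv x w 1 + du x w 0 * fderiv ℝ (dv x) w d 1
            - (fderiv ℝ (du x) w d 1 * dv x w 0 + du x w 1 * fderiv ℝ (dv x) w d 0)) := by
      rw [← fderiv_proj3 hydiff 2 d]
      have e0 : (fun z => ((2 * H (x z)) • cross3 (du x z) (dv x z)) 2)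
          = fun z => (2 * H (x z)) * (du x z 0 * dv x z 1 - du x z 1 * dv x z 0) := rfl
      rw [e0, fderiv_mul_apply hφd (((hpa 0).fun_mul (hpb 1)).fun_sub ((hpa 1).fun_mul (hpb 0))) d,
        fderiv_sub_apply3 ((hpa 0).fun_mul (hpb 1)) ((hpa 1).fun_mul (hpb 0)) d,
        fderiv_mul_apply (hpa 0) (hpb 1) d, fderiv_mul_apply (hpa 1) (hpb 0) d,
        fderiv_proj3 hda 0 d, fderiv_proj3 hda 1 d, fderiv_proj3 hdb 0 d,
        fderiv_proj3 hdb 1 d]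
    simp only [dot3, cross3_0, cross3_1, cross3_2]
    rw [hF0, hF1, hF2]
    ring
  have hφval : ∀ d : ℝ × ℝ, fderiv ℝ (fun z => 2 * H (x z)) w d
      = 2 * dot3 (grad3 H (x w)) (fderiv ℝ x w d) := by
    intro d
    have h1 : DifferentiableAt ℝ (fun z => H (x z)) w :=
      ((hH.differentiable (by norm_num)).differentiableAt).comp w hdx
    rw [fderiv_const_mul h1 2]
    simp only [ContinuousLinearMap.smul_apply, smul_eq_mul]
    rw [fderiv_comp_H hH hdx d]
  -- cross-term evaluations
  have hcr1 : dot3 (Nf x w) (cross3 (du (du x) w) (dv x w)) = dot3 (du (du x) w) (du x w) := by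
    show dot3 ((Wf x w)⁻¹ • cross3 (du x w) (dv x w)) _ = _
    rw [dot3_smul_left, lagrange3, rbb, rab, dot3_comm (du x w) (du (du x) w)]
    field_simp
    ring
  have hcr2 : dot3 (Nf x w) (cross3 (du x w) (du (dv x) w)) = dot3 (du (du x) w) (du x w) := by
    show dot3 ((Wf x w)⁻¹ • cross3 (du x w) (dv x w)) _ = _
    rw [dot3_smul_left, lagrange3, raa, dot3_comm (dv x w) (du x w), rab,
      dot3_comm (dv x w) (du (dv x) w)]
    rw [z1]
    field_simp
    ring
  have hcr3 : dot3 (Nf x w) (cross3 (dv (du x) w) (dv x w)) = dot3 (dv (du x) w) (du x w) := by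
    show dot3 ((Wf x w)⁻¹ • cross3 (du x w) (dv x w)) _ = _
    rw [dot3_smul_left, lagrange3, rbb, rab, dot3_comm (du x w) (dv (du x) w)]
    field_simp
    ring
  have hcr4 : dot3 (Nf x w) (cross3 (du x w) (dv (dv x) w)) = dot3 (dv (du x) w) (du x w) := by
    show dot3 ((Wf x w)⁻¹ • cross3 (du x w) (dv x w)) _ = _
    rw [dot3_smul_left, lagrange3, raa, dot3_comm (dv x w) (du x w), rab,
      dot3_comm (dv x w) (dv (dv x) w)]
    rw [z2]
    field_simp
    ring
  -- the PDE holds near w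
  have hPy : (fun z => du (du x) z + dv (dv x) z)
      =ᶠ[nhds w] (fun z => (2 * H (x z)) • cross3 (du x z) (dv x z)) :=
    Filter.eventually_of_mem (hBopen.mem_nhds hw) (fun z hz => (hxH z hz).1)
  have hTA : dot3 (Nf x w) (du (du (du x)) w) + dot3 (Nf x w) (dv (dv (du x)) w)
      = 2 * dot3 (grad3 H (x w)) (du x w) * Wf x w
        + 4 * H (x w) * dot3 (du (du x) w) (du x w) := by
    have hsplit : du (du (du x)) w + dv (dv (du x)) w
        = fderiv ℝ (fun z => du (du x) z + dv (dv x) z) w ((1:ℝ),(0:ℝ)) := by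
      rw [J1]
      exact (fderiv_add_applyV hdAu hdBv ((1:ℝ),(0:ℝ))).symm
    have step : dot3 (Nf x w) (du (du (du x)) w + dv (dv (du x)) w)
        = 2 * dot3 (grad3 H (x w)) (du x w) * Wf x w
          + 4 * H (x w) * dot3 (du (du x) w) (du x w) := by
      rw [hsplit, hPy.fderiv_eq]
      have h2 := hyd ((1:ℝ),(0:ℝ))
      have h2' : dot3 (Nf x w)
          (fderiv ℝ (fun z => (2 * H (x z)) • cross3 (du x z) (dv x z)) w ((1:ℝ),(0:ℝ)))
          = fderiv ℝ (fun z => 2 * H (x z)) w ((1:ℝ),(0:ℝ)) * dot3 (Nf x w) (cross3 (du x w) (dv x w))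
            + 2 * H (x w) * (dot3 (Nf x w) (cross3 (du (du x) w) (dv x w))
              + dot3 (Nf x w) (cross3 (du x w) (du (dv x) w))) := h2
      rw [h2', hφval ((1:ℝ),(0:ℝ)), rNc, hcr1, hcr2]
      have hga : dot3 (grad3 H (x w)) (fderiv ℝ x w ((1:ℝ),(0:ℝ)))
          = dot3 (grad3 H (x w)) (du x w) := rfl
      rw [hga]
      ring
    have hsplitdot : dot3 (Nf x w) (du (du (du x)) w + dv (dv (du x)) w)
        = dot3 (Nf x w) (du (du (du x)) w) + dot3 (Nf x w) (dv (dv (du x)) w) :=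
      dot3_add_right _ _ _
    rw [← hsplitdot]
    exact step
  have hTB : dot3 (Nf x w) (du (du (dv x)) w) + dot3 (Nf x w) (dv (dv (dv x)) w)
      = 2 * dot3 (grad3 H (x w)) (dv x w) * Wf x w
        + 4 * H (x w) * dot3 (dv (du x) w) (du x w) := by
    have hsplit : du (du (dv x)) w + dv (dv (dv x)) w
        = fderiv ℝ (fun z => du (du x) z + dv (dv x) z) w ((0:ℝ),(1:ℝ)) := by
      rw [J2]
      exact (fderiv_add_applyV hdAu hdBv ((0:ℝ),(1:ℝ))).symm
    have step : dot3 (Nf x w) (du (du (dv x)) w + dv (dv (dv x)) w)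
        = 2 * dot3 (grad3 H (x w)) (dv x w) * Wf x w
          + 4 * H (x w) * dot3 (dv (du x) w) (du x w) := by
      rw [hsplit, hPy.fderiv_eq]
      have h2 := hyd ((0:ℝ),(1:ℝ))
      have h2' : dot3 (Nf x w)
          (fderiv ℝ (fun z => (2 * H (x z)) • cross3 (du x z) (dv x z)) w ((0:ℝ),(1:ℝ)))
          = fderiv ℝ (fun z => 2 * H (x z)) w ((0:ℝ),(1:ℝ)) * dot3 (Nf x w) (cross3 (du x w) (dv x w))
            + 2 * H (x w) * (dot3 (Nf x w) (cross3 (dv (du x) w) (dv x w))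
              + dot3 (Nf x w) (cross3 (du x w) (dv (dv x) w))) := h2
      rw [h2', hφval ((0:ℝ),(1:ℝ)), rNc, hcr3, hcr4]
      have hgb : dot3 (grad3 H (x w)) (fderiv ℝ x w ((0:ℝ),(1:ℝ)))
          = dot3 (grad3 H (x w)) (dv x w) := rfl
      rw [hgb]
      ring
    have hsplitdot : dot3 (Nf x w) (du (du (dv x)) w + dv (dv (dv x)) w)
        = dot3 (Nf x w) (du (du (dv x)) w) + dot3 (Nf x w) (dv (dv (dv x)) w) :=
      dot3_add_right _ _ _
    rw [← hsplitdot]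
    exact step
  -- dot products of second derivatives with the frame
  have va2 : dot3 (du (du x) w) (dv x w) = -(dot3 (dv (du x) w) (du x w)) := by
    have h := z3
    rw [rBuQ] at h
    have hc := dot3_comm (du x w) (dv (du x) w)
    linarith
  have vq2 : dot3 (dv (du x) w) (dv x w) = dot3 (du (du x) w) (du x w) := by
    have h := z1
    rw [rBuQ] at h
    linarith
  have vb1 : dot3 (dv (dv x) w) (du x w) = -(dot3 (du (du x) w) (du x w)) := by
    have h := z4
    have hc := dot3_comm (du x w) (dv (dv x) w)
    linarith [vq2]
  have vb2 : dot3 (dv (dv x) w) (dv x w) = dot3 (dv (du x) w) (du x w) := z2.symm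
  have nu1 : dot3 (du (Nf x) w) (du x w) = -(dot3 (du (du x) w) (Nf x w)) := by
    have hc := dot3_comm (Nf x w) (du (du x) w)
    linarith [fstNa_u]
  have nu2 : dot3 (du (Nf x) w) (dv x w) = -(dot3 (dv (du x) w) (Nf x w)) := by
    have h := fstNb_u
    rw [rBuQ] at h
    have hc := dot3_comm (Nf x w) (dv (du x) w)
    linarith
  have nv1 : dot3 (dv (Nf x) w) (du x w) = -(dot3 (dv (du x) w) (Nf x w)) := by
    have hc := dot3_comm (Nf x w) (dv (du x) w)
    linarith [fstNa_v]
  have nv2 : dot3 (dv (Nf x) w) (dv x w) = -(dot3 (dv (dv x) w) (Nf x w)) := by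
    have hc := dot3_comm (Nf x w) (dv (dv x) w)
    linarith [fstNb_v]
  -- Weingarten-type inner products via the frame decomposition
  have P1 : (Wf x w)^2 * dot3 (du (Nf x) w) (du (du x) w)
      = Wf x w * (-(dot3 (du (du x) w) (Nf x w)) * dot3 (du (du x) w) (du x w)
          + dot3 (dv (du x) w) (Nf x w) * dot3 (dv (du x) w) (du x w)) := by
    rw [parseval3' raa rbb rab hpos, rvc (du (Nf x) w), fstNN_u, nu1, nu2, va2]
    ring
  have P2 : (Wf x w)^2 * dot3 (dv (Nf x) w) (dv (du x) w)
      = Wf x w * (-(dot3 (dv (du x) w) (Nf x w)) * dot3 (dv (du x) w) (du x w)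
          - dot3 (dv (dv x) w) (Nf x w) * dot3 (du (du x) w) (du x w)) := by
    rw [parseval3' raa rbb rab hpos, rvc (dv (Nf x) w), fstNN_v, nv1, nv2, vq2]
    ring
  have P3 : (Wf x w)^2 * dot3 (du (Nf x) w) (dv (du x) w)
      = Wf x w * (-(dot3 (du (du x) w) (Nf x w)) * dot3 (dv (du x) w) (du x w)
          - dot3 (dv (du x) w) (Nf x w) * dot3 (du (du x) w) (du x w)) := by
    rw [parseval3' raa rbb rab hpos, rvc (du (Nf x) w), fstNN_u, nu1, nu2, vq2]
    ring
  have P4 : (Wf x w)^2 * dot3 (dv (Nf x) w) (dv (dv x) w)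
      = Wf x w * (dot3 (dv (du x) w) (Nf x w) * dot3 (du (du x) w) (du x w)
          - dot3 (dv (dv x) w) (Nf x w) * dot3 (dv (du x) w) (du x w)) := by
    rw [parseval3' raa rbb rab hpos, rvc (dv (Nf x) w), fstNN_v, nv1, nv2, vb1, vb2]
    ring
  have P5 : Wf x w * dot3 (du (Nf x) w) (du (Nf x) w)
      = (dot3 (du (du x) w) (Nf x w))^2 + (dot3 (dv (du x) w) (Nf x w))^2 := by
    apply mul_left_cancel₀ hWne
    have h : (Wf x w)^2 * dot3 (du (Nf x) w) (du (Nf x) w)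
        = Wf x w * ((dot3 (du (du x) w) (Nf x w))^2 + (dot3 (dv (du x) w) (Nf x w))^2) := by
      rw [parseval3' raa rbb rab hpos, rvc (du (Nf x) w), fstNN_u, nu1, nu2]
      ring
    linear_combination h
  have P6 : Wf x w * dot3 (dv (Nf x) w) (dv (Nf x) w)
      = (dot3 (dv (du x) w) (Nf x w))^2 + (dot3 (dv (dv x) w) (Nf x w))^2 := by
    apply mul_left_cancel₀ hWne
    have h : (Wf x w)^2 * dot3 (dv (Nf x) w) (dv (Nf x) w)
        = Wf x w * ((dot3 (dv (du x) w) (Nf x w))^2 + (dot3 (dv (dv x) w) (Nf x w))^2) := by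
      rw [parseval3' raa rbb rab hpos, rvc (dv (Nf x) w), fstNN_v, nv1, nv2]
      ring
    linear_combination h
  -- normal components of the Laplacian of N
  have r1val : dot3 (du (du (Nf x)) w) (Nf x w) = -(dot3 (du (Nf x) w) (du (Nf x) w)) := by
    have hc := dot3_comm (Nf x w) (du (du (Nf x)) w)
    linarith [S5]
  have r2val : dot3 (dv (dv (Nf x)) w) (Nf x w) = -(dot3 (dv (Nf x) w) (dv (Nf x) w)) := by
    have hc := dot3_comm (Nf x w) (dv (dv (Nf x)) w)
    linarith [S6]
  -- tangential sums
  have hsumA : dot3 (du (Nf x) w) (du (du x) w) + dot3 (dv (Nf x) w) (dv (du x) w)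
      = -(2 * H (x w) * dot3 (du (du x) w) (du x w)) := by
    apply mul_left_cancel₀ (pow_ne_zero 2 hWne)
    linear_combination P1 + P2 + (-(Wf x w) * dot3 (du (du x) w) (du x w)) * rtrace
  have hsumB : dot3 (du (Nf x) w) (dv (du x) w) + dot3 (dv (Nf x) w) (dv (dv x) w)
      = -(2 * H (x w) * dot3 (dv (du x) w) (du x w)) := by
    apply mul_left_cancel₀ (pow_ne_zero 2 hWne)
    linear_combination P3 + P4 + (-(Wf x w) * dot3 (dv (du x) w) (du x w)) * rtrace
  -- Gaussian curvature
  have hKg2 : Kg x w * (Wf x w)^2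
      = dot3 (du (du x) w) (Nf x w) * dot3 (dv (dv x) w) (Nf x w)
        - (dot3 (dv (du x) w) (Nf x w))^2 := by
    have h : Kg x w = (dot3 (du (du x) w) (Nf x w) * dot3 (dv (dv x) w) (Nf x w)
        - (dot3 (dv (du x) w) (Nf x w))^2) / (Wf x w)^2 := rfl
    rw [h]
    field_simp
  -- rewrite S3 using the symmetry of mixed derivatives
  have S3' : 0 = dot3 (du (du (Nf x)) w) (dv x w) + 2 * dot3 (du (Nf x) w) (dv (du x) w)
      + dot3 (Nf x w) (du (du (dv x)) w) := by
    have h := S3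
    rw [rBuQ] at h
    exact h
  -- final assembly
  rw [← sub_eq_zero]
  apply eq_zero_of_dot3 (a := du x w) (b := dv x w)
  · simp only [dot3_sub_left, dot3_add_left, dot3_smul_left]
    rw [hNa0 w]
    linear_combination (-1 : ℝ) * S1 + (-1 : ℝ) * S2 - hTA - 2 * hsumA
  · simp only [dot3_sub_left, dot3_add_left, dot3_smul_left]
    rw [hNb0 w]
    linear_combination (-1 : ℝ) * S3' + (-1 : ℝ) * S4 - hTB - 2 * hsumB
  · simp only [dot3_sub_left, dot3_add_left, dot3_smul_left]
    rw [rvc (du (du (Nf x)) w), rvc (dv (dv (Nf x)) w), rvc (grad3 H (x w)), rNc,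
      r1val, r2val]
    linear_combination (-1 : ℝ) * P5 + (-1 : ℝ) * P6 + (-2 : ℝ) * hKg2
      - (dot3 (du (du x) w) (Nf x w) + dot3 (dv (dv x) w) (Nf x w)
          + 2 * H (x w) * Wf x w) * rtrace
  · rw [rcc]
    positivity
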